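/- Let n≥3. Then for every 0<i<2^{n+1} there exists u with 0<u<2^{n+2} and u≠2^{n+1} such that the u-th term of the sequence (σ^i((ε_n 𝜀̄_n)^∞),(ε_n (𝜀̄_n)^+ 𝜀̄_n (ε_n)^−)^∞) belongs to {(1,1),(−1,−1)}. -/

import Mathlib

open scoped Pointwise ENNReal
open Filter

noncomputable section

/-- The digit set Ω₁ = {(0,0),(0,1),(1,0)} ⊆ ℝ². -/
def Omega1 : Set (ℝ × ℝ) := {((0:ℝ), (0:ℝ)), (0, 1), (1, 0)}

/-- The digit set Ω₂ = Ω₁ − Ω₁ ⊆ ℝ². -/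
def Omega2 : Set (ℝ × ℝ) :=
  {((0:ℝ), (0:ℝ)), (0, 1), (1, 0), (-1, 0), (-1, 1), (0, -1), (1, -1)}

/-- The Sierpinski gasket in base `q`. -/
def gasket (q : ℝ) : Set (ℝ × ℝ) :=
  {x | ∃ c : ℕ → ℝ × ℝ, (∀ i, c i ∈ Omega1) ∧ x = ∑' i, (q ^ (i + 1))⁻¹ • c i}

/-- `U_q`: points of `[-1/(q-1), 1/(q-1)]` having a unique `q`-expansion over `{-1,0,1}`. -/
def uniqSet (q : ℝ) : Set ℝ :=
  {s | s ∈ Set.Icc (-(1 / (q - 1))) (1 / (q - 1)) ∧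
    ∃! t : ℕ → ℝ, (∀ i, t i ∈ ({-1, 0, 1} : Set ℝ)) ∧ s = ∑' i, t i / q ^ (i + 1)}

/-- The set `T`. -/
def Tset (q : ℝ) : Set (ℝ × ℝ) :=
  {t | t ∈ gasket q - gasket q ∧ t.1 ∈ uniqSet q ∧ t.2 ∈ uniqSet q}

/-- The set `D_q` of Hausdorff dimensions of intersections. -/
def Dset (q : ℝ) : Set ℝ≥0∞ :=
  {d | ∃ t ∈ Tset q, d = dimH (gasket q ∩ ((· + t) '' gasket q))}

/-- The words `w_n` over `{0,1,2}`: `klWord 0 = w₁ = 2`,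
`w_{n+1} = (w_n ⟨reflection of w_n⟩)⁺`. -/
def klWord : ℕ → List ℕ
  | 0 => [2]
  | n + 1 =>
    let w := klWord n ++ (klWord n).map (fun x => 2 - x)
    w.dropLast ++ [w.getLast?.getD 0 + 1]

/-- `isKLBase n p`: `p ∈ (2,3)` and `1` has (greedy) expansion `w_n 0^∞` in base `p`
w.r.t. `{0,1,2}`, i.e. `p = q_n`. -/
def isKLBase (n : ℕ) (p : ℝ) : Prop :=
  p ∈ Set.Ioo (2 : ℝ) 3 ∧
    (1 : ℝ) = ∑ i ∈ Finset.range (klWord (n - 1)).length,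
      ((klWord (n - 1)).getD i 0 : ℝ) / p ^ (i + 1)

/-- `1` has a unique expansion in base `p` w.r.t. the digit set `{0,1,2}`. -/
def uniqueOneExp (p : ℝ) : Prop :=
  ∃! c : ℕ → ℕ, (∀ i, c i ≤ 2) ∧ (1 : ℝ) = ∑' i, (c i : ℝ) / p ^ (i + 1)

/-- The Thue–Morse sequence. -/
def tm : ℕ → ℕ
  | 0 => 0
  | n + 1 => if (n + 1) % 2 = 0 then tm ((n + 1) / 2) else 1 - tm ((n + 1) / 2)
decreasing_by all_goals omega

/-- `λ_i = τ_i − τ_{i−1}` (for `i ≥ 1`). -/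
def lam (i : ℕ) : ℤ := (tm i : ℤ) - (tm (i - 1) : ℤ)

/-- The word `ε_n = λ₁ ⋯ λ_{2^n}`. -/
def eps (n : ℕ) : List ℤ := (List.range (2 ^ n)).map fun i => lam (i + 1)

/-- Reflection of a word over `{-1,0,1}`: each digit `x` is replaced by `-x`. -/
def reflect (w : List ℤ) : List ℤ := w.map fun x => -x

/-- `w⁺`: the last digit is increased by `1`. -/
def plusOne (w : List ℤ) : List ℤ := w.dropLast ++ [w.getLast?.getD 0 + 1]

/-- `w⁻`: the last digit is decreased by `1`. -/
def minusOne (w : List ℤ) : List ℤ := w.dropLast ++ [w.getLast?.getD 0 - 1]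

/-- The periodic sequence `w^∞` (the `(j+1)`-st term is `per w j`). -/
def per (w : List ℤ) : ℕ → ℤ := fun j => w.getD (j % w.length) 0

/-- `EndsWith x s`: the sequence `x` ends with (has tail) the sequence `s`. -/
def EndsWith {α : Type*} (x s : ℕ → α) : Prop := ∃ k, ∀ j, x (j + k) = s j

/-- The digit set Ω₂ as a subset of ℤ × ℤ. -/
def Omega2Z : Set (ℤ × ℤ) :=
  {((0:ℤ), (0:ℤ)), (0, 1), (1, 0), (-1, 0), (-1, 1), (0, -1), (1, -1)}

/-- `E_{n,m}^i = (σ^i((ε_n ε̄_n)^∞), (ε_m ε̄_m)^∞)` (the `(j+1)`-st term is `Eseq n m i j`). -/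
def Eseq (n m i : ℕ) : ℕ → ℤ × ℤ := fun j =>
  (per (eps n ++ reflect (eps n)) (j + i), per (eps m ++ reflect (eps m)) j)


/-- `A_k = a₁ ⋯ a_{2^k}` where `a_i = λ_{2i−1}`. -/
def Aword (k : ℕ) : List ℤ := (List.range (2 ^ k)).map fun i => lam (2 * i + 1)

/-- `D_{k,k}^i = (σ^i((A_k Ā_k)^∞), (A_k Ā_k)^∞)`. -/
def Dseq (k i : ℕ) : ℕ → ℤ × ℤ := fun j =>
  (per (Aword k ++ reflect (Aword k)) (j + i), per (Aword k ++ reflect (Aword k)) j)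

/-- `U_q'`: the set of sequences over `{-1,0,1}` which are the unique `q`-expansion
of the number they represent. -/
def uniqSeqSet (q : ℝ) : Set (ℕ → ℤ) :=
  {t | (∀ i, t i ∈ ({-1, 0, 1} : Set ℤ)) ∧
    ∀ s : ℕ → ℤ, (∀ i, s i ∈ ({-1, 0, 1} : Set ℤ)) →
      (∑' i, (s i : ℝ) / q ^ (i + 1)) = (∑' i, (t i : ℝ) / q ^ (i + 1)) → s = t}

/-- `ε_{n-1} ε̄_{n-1}`, with the convention `ε_{-1} ε̄_{-1} := 00`. -/
def epsPair : ℕ → List ℤ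
  | 0 => [0, 0]
  | n + 1 => eps n ++ reflect (eps n)

/-- The finite prefix
`(ε_0 ε̄_0)^{j_0} (ε_0 ε̄_1)^{l_0} ⋯ (ε_{M-1} ε̄_{M-1})^{j_{M-1}} (ε_{M-1} ε̄_M)^{l_{M-1}}`. -/
def blockJL (j l : ℕ → ℕ) : ℕ → List ℤ
  | 0 => []
  | M + 1 => blockJL j l M
      ++ (List.replicate (j M) (eps M ++ reflect (eps M))).flatten
      ++ (List.replicate (l M) (eps M ++ reflect (eps (M + 1)))).flatten

/-- The tail of `t` starting at some position `k` follows the pattern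
`(ε_0 ε̄_0)^{j_0}(ε_0 ε̄_1)^{l_0}(ε_1 ε̄_1)^{j_1}(ε_1 ε̄_2)^{l_1}⋯`. -/
def TailFollows (t : ℕ → ℤ) (j l : ℕ → ℕ) : Prop :=
  ∃ k, ∀ M, ∀ i < (blockJL j l M).length, t (i + k) = (blockJL j l M).getD i 0

/-- As `TailFollows`, but for the reflection of the pattern. -/
def TailFollowsRefl (t : ℕ → ℤ) (j l : ℕ → ℕ) : Prop :=
  ∃ k, ∀ M, ∀ i < (blockJL j l M).length, t (i + k) = -(blockJL j l M).getD i 0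

/-- `a_n = 0 λ₁ ⋯ λ_{2^n−1}`. -/
def aword (n : ℕ) : List ℤ := 0 :: ((List.range (2 ^ n - 1)).map fun i => lam (i + 1))

/-- `b_n = (−1) λ₁ ⋯ λ_{2^n−1}`. -/
def bword (n : ℕ) : List ℤ := (-1) :: ((List.range (2 ^ n - 1)).map fun i => lam (i + 1))

/-- The transitions allowed by the matrix `A` on the alphabet `{a_n, b_n, ā_n, b̄_n}`:
`a→b, a→ā, b→ā, ā→a, ā→b̄, b̄→a`. -/
def allowedTrans (n : ℕ) (u v : List ℤ) : Prop :=
  (u = aword n ∧ (v = bword n ∨ v = reflect (aword n))) ∨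
  (u = bword n ∧ v = reflect (aword n)) ∨
  (u = reflect (aword n) ∧ (v = aword n ∨ v = reflect (bword n))) ∨
  (u = reflect (bword n) ∧ v = aword n)



lemma tm_zero : tm 0 = 0 := by rw [tm]
lemma tm_two_mul (k : ℕ) : tm (2 * k) = tm k := by
  rcases Nat.eq_zero_or_pos k with rfl | hk
  · rfl
  · have h : 2 * k = (2 * k - 1) + 1 := by omega
    have h2 : (2 * k - 1 + 1) % 2 = 0 := by omega
    have h3 : (2 * k - 1 + 1) / 2 = k := by omega
    rw [h, tm, if_pos h2, h3]
lemma tm_two_mul_add_one (k : ℕ) : tm (2 * k + 1) = 1 - tm k := by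
  have h2 : (2 * k + 1) % 2 ≠ 0 := by omega
  have h3 : (2 * k + 1) / 2 = k := by omega
  rw [tm, if_neg h2, h3]
lemma tm_le_one (k : ℕ) : tm k ≤ 1 := by
  induction k using Nat.strong_induction_on with
  | _ k ih =>
    match k with
    | 0 => simp [tm_zero]
    | n + 1 =>
      rcases Nat.even_or_odd (n+1) with ⟨m, hm⟩ | ⟨m, hm⟩
      · have : n + 1 = 2 * m := by omega
        rw [this, tm_two_mul]; exact ih m (by omega)
      · rw [hm, tm_two_mul_add_one]; omega
lemma tm_pow_add (n k : ℕ) (h : k < 2 ^ n) : tm (2 ^ n + k) = 1 - tm k := by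
  induction n generalizing k with
  | zero =>
    interval_cases k
    have : tm 1 = 1 := by rw [show (1:ℕ) = 2*0+1 from rfl, tm_two_mul_add_one, tm_zero]
    simp [this, tm_zero]
  | succ n ih =>
    rcases Nat.even_or_odd k with ⟨m, hm⟩ | ⟨m, hm⟩
    · have h1 : 2 ^ (n+1) + k = 2 * (2 ^ n + m) := by rw [hm]; ring
      have h2 : k = 2 * m := by omega
      rw [h1, tm_two_mul, ih m (by omega), h2, tm_two_mul]
    · have h1 : 2 ^ (n+1) + k = 2 * (2 ^ n + m) + 1 := by omega
      have h2 : k = 2 * m + 1 := by omega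
      have := tm_le_one m
      rw [h1, tm_two_mul_add_one, ih m (by omega), h2, tm_two_mul_add_one]
lemma tm_pow (n : ℕ) : tm (2 ^ n) = 1 := by
  have := tm_pow_add n 0 (by positivity)
  simpa [tm_zero] using this


lemma lam_odd (k : ℕ) : lam (2 * k + 1) = 1 - 2 * (tm k : ℤ) := by
  have h1 : tm (2 * k + 1) = 1 - tm k := tm_two_mul_add_one k
  have h2 : tm (2 * k) = tm k := tm_two_mul k
  have h3 := tm_le_one k
  unfold lam
  rw [show 2 * k + 1 - 1 = 2 * k from rfl, h1, h2]
  omega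

lemma lam_odd' (k : ℕ) : lam (2 * k + 1) = 1 ∨ lam (2 * k + 1) = -1 := by
  have := lam_odd k; have := tm_le_one k
  interval_cases h : tm k <;> simp [lam_odd, h]

lemma lam_one : lam 1 = 1 := by simpa [tm_zero] using lam_odd 0

lemma lam_flip (n m : ℕ) (h1 : 1 ≤ m) (hm : m < 2 ^ n) : lam (2 ^ n + m) = -lam m := by
  have ha : tm (2 ^ n + m) = 1 - tm m := tm_pow_add n m hm
  have hb : tm (2 ^ n + m - 1) = 1 - tm (m - 1) := by
    have : 2 ^ n + m - 1 = 2 ^ n + (m - 1) := by omega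
    rw [this]; exact tm_pow_add n (m-1) (by omega)
  have h3 := tm_le_one m
  have h4 := tm_le_one (m - 1)
  unfold lam
  rw [ha, hb]
  omega

lemma lam_top (n : ℕ) : lam (2 ^ (n + 1)) = -lam (2 ^ n) + 1 := by
  have ha : tm (2 ^ (n+1)) = 1 := tm_pow (n+1)
  have hb : tm (2 ^ (n+1) - 1) = 1 - tm (2 ^ n - 1) := by
    have h0 : (1:ℕ) ≤ 2 ^ n := Nat.one_le_two_pow
    have : 2 ^ (n+1) - 1 = 2 ^ n + (2 ^ n - 1) := by
      have : 2 ^ (n+1) = 2 ^ n + 2 ^ n := by ring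
      omega
    rw [this]; exact tm_pow_add n _ (by omega)
  have hc : tm (2 ^ n) = 1 := tm_pow n
  have h4 := tm_le_one (2 ^ n - 1)
  unfold lam
  rw [ha, hb, hc]
  omega

lemma eps_length (n : ℕ) : (eps n).length = 2 ^ n := by simp [eps]
lemma reflect_length (w : List ℤ) : (reflect w).length = w.length := by simp [reflect]
lemma eps_getD (n s : ℕ) (h : s < 2 ^ n) : (eps n).getD s 0 = lam (s + 1) := by
  rw [List.getD_eq_getElem _ _ (by simp [eps_length, h])]
  simp [eps]
lemma reflect_getD (w : List ℤ) (s : ℕ) (h : s < w.length) :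
    (reflect w).getD s 0 = -(w.getD s 0) := by
  rw [List.getD_eq_getElem _ _ (by simp [reflect_length, h]),
    List.getD_eq_getElem _ _ h]
  simp [reflect]
lemma plusOne_length (w : List ℤ) (h : w ≠ []) : (plusOne w).length = w.length := by
  have := List.length_pos_iff.mpr h
  simp [plusOne]
  omega
lemma minusOne_length (w : List ℤ) (h : w ≠ []) : (minusOne w).length = w.length := by
  have := List.length_pos_iff.mpr h
  simp [minusOne]
  omega
lemma plusOne_getD_lt (w : List ℤ) (s : ℕ) (h : s < w.length - 1) :
    (plusOne w).getD s 0 = w.getD s 0 := by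
  unfold plusOne
  rw [List.getD_append _ _ _ _ (by simp; omega)]
  rw [List.getD_eq_getElem _ _ (by simp; omega), List.getD_eq_getElem _ _ (by omega)]
  exact List.getElem_dropLast _
lemma getLast?_getD (w : List ℤ) (h : w ≠ []) :
    w.getLast?.getD 0 = w.getD (w.length - 1) 0 := by
  rw [List.getLast?_eq_getElem?, List.getD_eq_getElem _ _ (by
    have := List.length_pos_iff.mpr h; omega)]
  rw [List.getElem?_eq_getElem (by have := List.length_pos_iff.mpr h; omega)]
  rfl
lemma plusOne_getD_last (w : List ℤ) (h : w ≠ []) :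
    (plusOne w).getD (w.length - 1) 0 = w.getD (w.length - 1) 0 + 1 := by
  unfold plusOne
  rw [List.getD_append_right _ _ _ _ (by simp)]
  simp [getLast?_getD w h]
lemma minusOne_getD_lt (w : List ℤ) (s : ℕ) (h : s < w.length - 1) :
    (minusOne w).getD s 0 = w.getD s 0 := by
  unfold minusOne
  rw [List.getD_append _ _ _ _ (by simp; omega)]
  rw [List.getD_eq_getElem _ _ (by simp; omega), List.getD_eq_getElem _ _ (by omega)]
  exact List.getElem_dropLast _
lemma minusOne_getD_last (w : List ℤ) (h : w ≠ []) :
    (minusOne w).getD (w.length - 1) 0 = w.getD (w.length - 1) 0 - 1 := by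
  unfold minusOne
  rw [List.getD_append_right _ _ _ _ (by simp)]
  simp [getLast?_getD w h]

lemma lam_four : lam 4 = 1 := by
  have h4 : tm 4 = 1 := by
    rw [show (4:ℕ) = 2*2 from rfl, tm_two_mul, show (2:ℕ) = 2*1 from rfl, tm_two_mul,
      show (1:ℕ) = 2*0+1 from rfl, tm_two_mul_add_one, tm_zero]
  have h3 : tm 3 = 0 := by
    rw [show (3:ℕ) = 2*1+1 from rfl, tm_two_mul_add_one,
      show (1:ℕ) = 2*0+1 from rfl, tm_two_mul_add_one, tm_zero]
  unfold lam
  rw [show (4:ℕ) - 1 = 3 from rfl, h4, h3]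
  rfl

section Main
variable (n : ℕ)

lemma eps_ne_nil : eps n ≠ [] := by
  have := eps_length n
  intro h; rw [h] at this; simp at this
  exact absurd this.symm (by positivity)

lemma refl_eps_ne_nil : reflect (eps n) ≠ [] := by
  intro h
  have := reflect_length (eps n)
  rw [h] at this; simp at this
  exact eps_ne_nil n (List.length_eq_zero_iff.mp this.symm)

lemma X_length : (eps n ++ reflect (eps n)).length = 2 * 2 ^ n := by
  simp [reflect_length, eps_length]; ring

lemma X_getD (r : ℕ) (hr : r < 2 * 2 ^ n) :
    (eps n ++ reflect (eps n)).getD r 0 =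
      if r < 2 ^ n then lam (r + 1) else -lam (r - 2 ^ n + 1) := by
  by_cases h : r < 2 ^ n
  · rw [if_pos h, List.getD_append _ _ _ _ (by rw [eps_length]; exact h), eps_getD n r h]
  · rw [if_neg h, List.getD_append_right _ _ _ _ (by rw [eps_length]; omega),
      eps_length, reflect_getD _ _ (by rw [eps_length]; omega),
      eps_getD n _ (by omega)]

lemma Y_length :
    (eps n ++ plusOne (reflect (eps n)) ++ reflect (eps n) ++ minusOne (eps n)).length
      = 4 * 2 ^ n := by
  simp [List.length_append, plusOne_length _ (refl_eps_ne_nil n),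
    minusOne_length _ (eps_ne_nil n), reflect_length, eps_length]
  ring

lemma Y_getD (r : ℕ) (hr : r < 4 * 2 ^ n) :
    (eps n ++ plusOne (reflect (eps n)) ++ reflect (eps n) ++ minusOne (eps n)).getD r 0 =
      if r < 2 * 2 ^ n then lam (r + 1) else -lam (r - 2 * 2 ^ n + 1) := by
  have hN : 0 < 2 ^ n := by positivity
  have hlP : (plusOne (reflect (eps n))).length = 2 ^ n := by
    rw [plusOne_length _ (refl_eps_ne_nil n), reflect_length, eps_length]
  have hlM : (minusOne (eps n)).length = 2 ^ n := by
    rw [minusOne_length _ (eps_ne_nil n), eps_length]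
  have hlR : (reflect (eps n)).length = 2 ^ n := by rw [reflect_length, eps_length]
  have hlE := eps_length n
  by_cases h1 : r < 2 ^ n
  · rw [if_pos (by omega)]
    rw [List.getD_append _ _ _ _ (by simp [List.length_append, hlP, hlR, hlE]; omega),
      List.getD_append _ _ _ _ (by simp [List.length_append, hlP, hlE]; omega),
      List.getD_append _ _ _ _ (by rw [hlE]; omega), eps_getD n r h1]
  by_cases h2 : r < 2 * 2 ^ n
  · rw [if_pos h2]
    rw [List.getD_append _ _ _ _ (by simp [List.length_append, hlP, hlR, hlE]; omega),
      List.getD_append _ _ _ _ (by simp [List.length_append, hlP, hlE]; omega),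
      List.getD_append_right _ _ _ _ (by rw [hlE]; omega), hlE]
    by_cases h3 : r = 2 * 2 ^ n - 1
    · have hrr : r - 2 ^ n = (reflect (eps n)).length - 1 := by rw [hlR]; omega
      rw [hrr, plusOne_getD_last _ (refl_eps_ne_nil n), hlR,
        reflect_getD _ _ (by rw [hlE]; omega), eps_getD n _ (by omega),
        show 2 ^ n - 1 + 1 = 2 ^ n by omega]
      have := lam_top n
      rw [show r + 1 = 2 ^ (n + 1) by rw [pow_succ]; omega] at *
      omega
    · rw [plusOne_getD_lt _ _ (by rw [hlR]; omega),
        reflect_getD _ _ (by rw [hlE]; omega), eps_getD n _ (by omega)]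
      have := lam_flip n (r - 2 ^ n + 1) (by omega) (by omega)
      rw [show 2 ^ n + (r - 2 ^ n + 1) = r + 1 by omega] at this
      omega
  by_cases h3 : r < 3 * 2 ^ n
  · rw [if_neg h2]
    rw [List.getD_append _ _ _ _ (by simp [List.length_append, hlP, hlR, hlE]; omega),
      List.getD_append_right _ _ _ _ (by simp [List.length_append, hlP, hlE]; omega),
      List.length_append, hlE, hlP,
      reflect_getD _ _ (by rw [hlE]; omega), eps_getD n _ (by omega),
      show r - (2 ^ n + 2 ^ n) + 1 = r - 2 * 2 ^ n + 1 by omega]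
  · rw [if_neg h2]
    rw [List.getD_append_right _ _ _ _
        (by simp [List.length_append, hlP, hlR, hlE]; omega),
      show ((eps n ++ plusOne (reflect (eps n)) ++ reflect (eps n))).length = 3 * 2 ^ n
        by simp [List.length_append, hlP, hlR, hlE]; ring]
    by_cases h4 : r = 4 * 2 ^ n - 1
    · have hrr : r - 3 * 2 ^ n = (eps n).length - 1 := by rw [hlE]; omega
      rw [hrr, minusOne_getD_last _ (eps_ne_nil n), hlE, eps_getD n _ (by omega),
        show 2 ^ n - 1 + 1 = 2 ^ n by omega]
      have := lam_top n
      rw [show r - 2 * 2 ^ n + 1 = 2 ^ (n + 1) by rw [pow_succ]; omega]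
      omega
    · rw [minusOne_getD_lt _ _ (by rw [hlE]; omega), eps_getD n _ (by omega)]
      have := lam_flip n (r - 3 * 2 ^ n + 1) (by omega) (by omega)
      rw [show 2 ^ n + (r - 3 * 2 ^ n + 1) = r - 2 * 2 ^ n + 1 by omega] at this
      omega

end Main

theorem stmt10 (n : ℕ) (hn : 3 ≤ n) (i : ℕ) (hi0 : 0 < i) (hi1 : i < 2 ^ (n + 1)) :
    ∃ u, 0 < u ∧ u < 2 ^ (n + 2) ∧ u ≠ 2 ^ (n + 1) ∧
      (per (eps n ++ reflect (eps n)) ((u - 1) + i),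
        per (eps n ++ plusOne (reflect (eps n)) ++ reflect (eps n) ++ minusOne (eps n))
          (u - 1)) ∈ ({(1, 1), (-1, -1)} : Set (ℤ × ℤ)) := by
  have hN : 8 ≤ 2 ^ n := by calc (8:ℕ) = 2 ^ 3 := rfl
                                 _ ≤ 2 ^ n := Nat.pow_le_pow_right (by norm_num) hn
  have hNeven : 2 ^ n % 2 = 0 := by
    have : (2:ℕ) ^ n = 2 * 2 ^ (n-1) := by
      rw [← pow_succ']; congr 1; omega
    omega
  have h2n1 : (2:ℕ) ^ (n + 1) = 2 * 2 ^ n := by rw [pow_succ]; ring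
  have h2n2 : (2:ℕ) ^ (n + 2) = 4 * 2 ^ n := by rw [pow_succ, pow_succ]; ring
  have hi1' : i < 2 * 2 ^ n := by omega
  set j₀ : ℕ := if i % 2 = 0 then 0 else 3 with hj₀
  have hj₀le : j₀ ≤ 3 := by rw [hj₀]; split <;> omega
  have hYj₀ : per (eps n ++ plusOne (reflect (eps n)) ++ reflect (eps n)
      ++ minusOne (eps n)) j₀ = 1 := by
    rw [per, Y_length, Nat.mod_eq_of_lt (by omega), Y_getD n j₀ (by omega),
      if_pos (by omega)]
    rw [hj₀]; split
    · exact lam_one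
    · exact lam_four
  have hYj₀' : per (eps n ++ plusOne (reflect (eps n)) ++ reflect (eps n)
      ++ minusOne (eps n)) (j₀ + 2 * 2 ^ n) = -1 := by
    rw [per, Y_length, Nat.mod_eq_of_lt (by omega), Y_getD n _ (by omega),
      if_neg (by omega), show j₀ + 2 * 2 ^ n - 2 * 2 ^ n = j₀ by omega]
    rw [hj₀]; split
    · rw [lam_one]
    · rw [lam_four]
  have hparity : (j₀ + i) % 2 = 0 := by rw [hj₀]; split <;> omega
  set r : ℕ := (j₀ + i) % (2 * 2 ^ n) with hr
  have hrlt : r < 2 * 2 ^ n := Nat.mod_lt _ (by omega)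
  have hreven : r % 2 = 0 := by
    have : (j₀ + i) % (2 * 2 ^ n) % 2 = (j₀ + i) % 2 :=
      Nat.mod_mod_of_dvd _ ⟨2 ^ n, rfl⟩
    rw [hr, this, hparity]
  have hXval : per (eps n ++ reflect (eps n)) (j₀ + i)
      = (eps n ++ reflect (eps n)).getD r 0 := by
    rw [per, X_length]
  have hs : (eps n ++ reflect (eps n)).getD r 0 = 1 ∨
      (eps n ++ reflect (eps n)).getD r 0 = -1 := by
    rw [X_getD n r hrlt]
    by_cases h : r < 2 ^ n
    · rw [if_pos h, show r + 1 = 2 * (r / 2) + 1 by omega]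
      exact lam_odd' _
    · rw [if_neg h, show r - 2 ^ n + 1 = 2 * ((r - 2 ^ n) / 2) + 1 by omega]
      rcases lam_odd' ((r - 2 ^ n) / 2) with h' | h' <;> rw [h'] <;> simp
  rcases hs with hs | hs
  · refine ⟨j₀ + 1, by omega, by omega, by omega, ?_⟩
    rw [show j₀ + 1 - 1 = j₀ from rfl, hXval, hs, hYj₀]
    left; rfl
  · refine ⟨j₀ + 1 + 2 * 2 ^ n, by omega, by omega, by omega, ?_⟩
    rw [show j₀ + 1 + 2 * 2 ^ n - 1 = j₀ + 2 * 2 ^ n by omega]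
    have hXval' : per (eps n ++ reflect (eps n)) (j₀ + 2 * 2 ^ n + i)
        = (eps n ++ reflect (eps n)).getD r 0 := by
      rw [per, X_length, hr, show j₀ + 2 * 2 ^ n + i = (j₀ + i) + 2 * 2 ^ n by ring,
        Nat.add_mod_right]
    rw [hXval', hs, hYj₀']
    right; rfl

end
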